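/- arXiv:1809.04892 — 2 statements merged into one kernel-verified Lean document; each statement's English description precedes it below -/
import Mathlib

section
/- Let A_r ∈ ℝ^{2n×2n} be the real Jordan block with blocks D = [[c,-d],[d,c]] on the diagonal and I₂ on the block superdiagonal, with d ≠ 0. Let E_r(t) be the block-diagonal matrix with n copies of the rotation matrix [[cos(dt), sin(dt)],[-sin(dt), cos(dt)]]. Then E_r(t)·A_r·E_r(t)^{-1} + E_r'(t)·E_r(t)^{-1} equals the matrix J_n(c) ⊗ I₂, where J_n(c) is the n×n Jordan block with eigenvalue c and ⊗ denotes the Kronecker product. -/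
open Matrix Kronecker

theorem rotation_conjugation_real_jordan_block (n : ℕ) (c d t : ℝ) (hd : d ≠ 0)
    (N : Matrix (Fin n) (Fin n) ℝ)
    (hN : ∀ i j : Fin n, N i j = if (i : ℕ) + 1 = (j : ℕ) then 1 else 0)
    (rot rot' : Matrix (Fin 2) (Fin 2) ℝ)
    (hrot : rot = !![Real.cos (d * t), Real.sin (d * t);
                     -Real.sin (d * t), Real.cos (d * t)])
    (hrot' : ∀ i j : Fin 2,
      HasDerivAt
        (fun s => (!![Real.cos (d * s), Real.sin (d * s);
                      -Real.sin (d * s), Real.cos (d * s)] : Matrix (Fin 2) (Fin 2) ℝ) i j)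
        (rot' i j) t)
    (Ar Er Er' : Matrix (Fin n × Fin 2) (Fin n × Fin 2) ℝ)
    (hAr : Ar = kroneckerMap (· * ·) (1 : Matrix (Fin n) (Fin n) ℝ) !![c, -d; d, c]
                + kroneckerMap (· * ·) N (1 : Matrix (Fin 2) (Fin 2) ℝ))
    (hEr : Er = kroneckerMap (· * ·) (1 : Matrix (Fin n) (Fin n) ℝ) rot)
    (hEr' : Er' = kroneckerMap (· * ·) (1 : Matrix (Fin n) (Fin n) ℝ) rot') :
    Er * Ar * Er⁻¹ + Er' * Er⁻¹ =
      kroneckerMap (· * ·) (c • (1 : Matrix (Fin n) (Fin n) ℝ) + N)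
        (1 : Matrix (Fin 2) (Fin 2) ℝ) := by
  have hlin : HasDerivAt (fun s : ℝ => d * s) d t := by
    simpa using (hasDerivAt_id t).const_mul d
  have hcos : HasDerivAt (fun s => Real.cos (d * s)) (-Real.sin (d * t) * d) t := hlin.cos
  have hsin : HasDerivAt (fun s => Real.sin (d * s)) (Real.cos (d * t) * d) t := hlin.sin
  have hrot'eq : rot' = !![-Real.sin (d * t) * d, Real.cos (d * t) * d;
                           -(Real.cos (d * t) * d), -Real.sin (d * t) * d] := by
    ext i j
    fin_cases i <;> fin_cases j
    · exact (hrot' 0 0).unique (by simpa using hcos)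
    · exact (hrot' 0 1).unique (by simpa using hsin)
    · exact (hrot' 1 0).unique (by simp; exact hsin.neg)
    · exact (hrot' 1 1).unique (by simpa using hcos)
  set R : Matrix (Fin 2) (Fin 2) ℝ :=
    !![Real.cos (d * t), -Real.sin (d * t); Real.sin (d * t), Real.cos (d * t)] with hR
  have hOrth : rot * R = 1 := by
    subst hrot
    ext i j
    fin_cases i <;> fin_cases j <;>
      simp [hR, Matrix.mul_apply, Fin.sum_univ_two, Matrix.one_apply] <;>
      first
      | linear_combination Real.sin_sq_add_cos_sq (d * t)
      | linear_combination (-1 : ℝ) * Real.sin_sq_add_cos_sq (d * t)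
      | ring
  have hKey : rot * !![c, -d; d, c] * R + rot' * R = c • (1 : Matrix (Fin 2) (Fin 2) ℝ) := by
    subst hrot; subst hrot'eq
    ext i j
    fin_cases i <;> fin_cases j <;>
      simp [hR, Matrix.mul_apply, Fin.sum_univ_two, Matrix.one_apply] <;>
      first
      | linear_combination c * Real.sin_sq_add_cos_sq (d * t)
      | linear_combination (-c) * Real.sin_sq_add_cos_sq (d * t)
      | ring
  have hinv : Er⁻¹ = (1 : Matrix (Fin n) (Fin n) ℝ) ⊗ₖ R := by
    apply inv_eq_right_inv
    rw [hEr]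
    show (1 ⊗ₖ rot) * (1 ⊗ₖ R) = 1
    rw [← Matrix.mul_kronecker_mul, hOrth, Matrix.one_mul, Matrix.one_kronecker_one]
  rw [hAr, hinv, hEr, hEr']
  show ((1 : Matrix (Fin n) (Fin n) ℝ) ⊗ₖ rot) * (1 ⊗ₖ !![c, -d; d, c] + N ⊗ₖ 1) * (1 ⊗ₖ R)
      + (1 ⊗ₖ rot') * (1 ⊗ₖ R) = (c • 1 + N) ⊗ₖ 1
  rw [Matrix.mul_add, Matrix.add_mul, ← Matrix.mul_kronecker_mul, ← Matrix.mul_kronecker_mul,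
    ← Matrix.mul_kronecker_mul, ← Matrix.mul_kronecker_mul, ← Matrix.mul_kronecker_mul]
  simp only [Matrix.one_mul, Matrix.mul_one]
  rw [hOrth, add_right_comm, ← Matrix.kronecker_add, hKey, Matrix.add_kronecker,
    Matrix.kronecker_smul, Matrix.smul_kronecker, Matrix.one_kronecker_one]
end

section
/- Let c ≥ 0, Δ > 0, T > 1, τ_D > 0 with 1/T + Δ/τ_D < 1. Let (R(z_k))_{k≥0} be a sequence of nonnegative reals (possibly non-constant) whose running average R̄_m := (R(z_0) + ... + R(z_{m-1}))/m satisfies R̄_m > c·Δ·log₂(e)/(1 - 1/T - Δ/τ_D) uniformly, i.e., there is ε > 0 with R̄_m ≥ c·Δ·log₂(e)/(1 - 1/T - Δ/τ_D) + ε for all m ≥ 1. Suppose also T_S(z_0, z_m) = m ≥ ((1-1/T-Δ/τ_D)/Δ)(z_m - z_0) - (κ+ηΔ)/Δ. Then e^{c(z_m - z_0)} / ∏_{k=1}^{m} 2^{R(z_{k-1})} → 0 as z_m - z_0 → ∞. -/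
open Filter

theorem average_data_rate_decay
    (c Δ T τD κ η ε : ℝ) (hc : 0 ≤ c) (hΔ : 0 < Δ) (hT : 1 < T) (hτD : 0 < τD)
    (hκ : 0 ≤ κ) (hη : 0 ≤ η) (hε : 0 < ε)
    (hcond : 1 / T + Δ / τD < 1)
    (R : ℕ → ℝ) (hRpos : ∀ k, 0 ≤ R k)
    -- the running average bit rate exceeds the threshold uniformly
    (havg : ∀ m : ℕ, 1 ≤ m →
      (∑ k ∈ Finset.range m, R k) / (m : ℝ) ≥
        c * Δ * (Real.log 2)⁻¹ / (1 - 1 / T - Δ / τD) + ε)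
    (z : ℕ → ℝ) (hmono : StrictMono z)
    -- T_S(z_0, z_m) = m together with Lemma 2
    (hTS : ∀ m : ℕ, (m : ℝ) ≥ ((1 - 1 / T - Δ / τD) / Δ) * (z m - z 0) - (κ + η * Δ) / Δ)
    (hzt : Tendsto (fun m => z m - z 0) atTop atTop) :
    Tendsto
      (fun m => Real.exp (c * (z m - z 0)) / ∏ k ∈ Finset.range m, (2 : ℝ) ^ (R k))
      atTop (nhds 0) :=  by
  have hD : 0 < 1 - 1 / T - Δ / τD := by linarith
  set D : ℝ := 1 - 1 / T - Δ / τD with hDdef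
  have hlog2 : 0 < Real.log 2 := Real.log_pos (by norm_num)
  have key : Tendsto (fun m : ℕ =>
      c * (z m - z 0) - Real.log 2 * ∑ k ∈ Finset.range m, R k) atTop atBot := by
    refine tendsto_atBot_mono' atTop
      (f₁ := fun m : ℕ => c * (κ + η * Δ) / D - ε * Real.log 2 * (m : ℝ)) ?_ ?_
    · filter_upwards [eventually_ge_atTop 1] with m hm
      have hmpos : (0 : ℝ) < (m : ℝ) := by exact_mod_cast hm
      have h1 := hTS m
      have h2 := havg m hm
      set S := ∑ k ∈ Finset.range m, R k with hS
      have hA : D * (z m - z 0) ≤ Δ * m + (κ + η * Δ) := by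
        rw [ge_iff_le, div_mul_eq_mul_div, ← sub_div, div_le_iff₀ hΔ] at h1
        linarith
      have hB : (c * Δ * (Real.log 2)⁻¹ / D + ε) * m ≤ S := by
        rw [ge_iff_le, le_div_iff₀ hmpos] at h2
        linarith
      have hB' : c * Δ * m + ε * Real.log 2 * D * m ≤ Real.log 2 * D * S := by
        calc c * Δ * m + ε * Real.log 2 * D * m
            = Real.log 2 * D * ((c * Δ * (Real.log 2)⁻¹ / D + ε) * m) := by
              field_simp
          _ ≤ Real.log 2 * D * S := by
              exact mul_le_mul_of_nonneg_left hB (by positivity)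
      have hA' := mul_le_mul_of_nonneg_left hA hc
      have hgoal : (c * (z m - z 0) - Real.log 2 * S) * D
          ≤ c * (κ + η * Δ) - ε * Real.log 2 * m * D := by nlinarith
      calc c * (z m - z 0) - Real.log 2 * S
          = ((c * (z m - z 0) - Real.log 2 * S) * D) / D := by field_simp
        _ ≤ (c * (κ + η * Δ) - ε * Real.log 2 * m * D) / D := by
            exact (div_le_div_iff_of_pos_right hD).mpr hgoal
        _ = c * (κ + η * Δ) / D - ε * Real.log 2 * m := by field_simp
    · have h1 : Tendsto (fun m : ℕ => ε * Real.log 2 * (m : ℝ)) atTop atTop :=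
        tendsto_natCast_atTop_atTop.const_mul_atTop (by positivity)
      have h2 : Tendsto (fun m : ℕ => -(ε * Real.log 2 * (m : ℝ))) atTop atBot :=
        tendsto_neg_atTop_atBot.comp h1
      exact (tendsto_atBot_add_const_left atTop (c * (κ + η * Δ) / D) h2).congr
        (fun m => by ring)
  have hcomp := Real.tendsto_exp_atBot.comp key
  refine hcomp.congr fun m => ?_
  simp only [Function.comp_apply]
  rw [Real.exp_sub, Finset.mul_sum, Real.exp_sum]
  congr 1
  exact Finset.prod_congr rfl fun k _ => (Real.rpow_def_of_pos (by norm_num) _).symm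
end
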